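/- Pumping a cycle: if a sequence of transitions of a counter machine contains a cycle with net counter effect v, then for every j ≥ 0 the sequence obtained by repeating the cycle j times (in place) is state-consistent with the same start and end states, and its net effect equals the original net effect plus (j − 1) · v. -/

import Mathlib

private lemma join_chain_aux {α : Type*} {R : α → α → Prop} {c : List α} (hc : c.Chain' R)
    (hne : c ≠ []) (hcy : ∀ x ∈ c.getLast?, ∀ y ∈ c.head?, R x y) (j : ℕ) :
    ((List.replicate j c).flatten).Chain' R ∧
    (j ≠ 0 → ((List.replicate j c).flatten).head? = c.head? ∧
      ((List.replicate j c).flatten).getLast? = c.getLast?) := by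
  induction j with
  | zero => simp [List.Chain']
  | succ n ih =>
    rw [List.replicate_succ, List.flatten_cons]
    rcases Nat.eq_zero_or_pos n with h0 | hpos
    · subst h0; simp [hc]
    · obtain ⟨hch, hhl⟩ := ih
      obtain ⟨hh, hl⟩ := hhl hpos.ne'
      have hJne : (List.replicate n c).flatten ≠ [] := by
        intro h; rw [h] at hh; simp [List.head?_eq_head hne] at hh
      refine ⟨List.isChain_append.mpr ⟨hc, hch, ?_⟩, fun _ => ⟨?_, ?_⟩⟩
      · intro x hx y hy; rw [hh] at hy; exact hcy x hx y hy
      · rw [List.head?_append_of_ne_nil _ hne]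
      · rw [List.getLast?_append_of_ne_nil _ hJne, hl]

/-- Pumping a cycle: repeating a cycle `j` times in place keeps the transition
sequence state-consistent, preserves the start and end states, and adds
`(j - 1) • v` to the net counter effect, where `v` is the cycle's net effect. -/
theorem stmt_17 {Q : Type*} {k : ℕ}
    (l₁ cyc l₂ : List (Q × Q × (Fin k → ℤ))) (hne : cyc ≠ []) (j : ℕ)
    (hcons : (l₁ ++ cyc ++ l₂).Chain' (fun s t => s.2.1 = t.1))
    (hcyc : (cyc.getLast hne).2.1 = (cyc.head hne).1) :
    (l₁ ++ (List.replicate j cyc).flatten ++ l₂).Chain' (fun s t => s.2.1 = t.1) ∧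
      (l₁ ++ (List.replicate j cyc).flatten ++ l₂ ≠ [] →
        Option.map Prod.fst (l₁ ++ (List.replicate j cyc).flatten ++ l₂).head? =
          Option.map Prod.fst (l₁ ++ cyc ++ l₂).head? ∧
        Option.map (fun t => t.2.1) (l₁ ++ (List.replicate j cyc).flatten ++ l₂).getLast? =
          Option.map (fun t => t.2.1) (l₁ ++ cyc ++ l₂).getLast?) ∧
      ((l₁ ++ (List.replicate j cyc).flatten ++ l₂).map (fun t => t.2.2)).sum =
        ((l₁ ++ cyc ++ l₂).map (fun t => t.2.2)).sum +
          ((j : ℤ) - 1) • (cyc.map (fun t => t.2.2)).sum := by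
  set R : (Q × Q × (Fin k → ℤ)) → (Q × Q × (Fin k → ℤ)) → Prop :=
    fun s t => s.2.1 = t.1 with hR
  simp only [List.Chain'] at hcons
  rw [List.append_assoc, List.isChain_append, List.isChain_append] at hcons
  obtain ⟨h1, ⟨hcchain, h2, hbc2⟩, hb1c⟩ := hcons
  have hcy : ∀ x ∈ cyc.getLast?, ∀ y ∈ cyc.head?, R x y := by
    intro x hx y hy
    rw [List.getLast?_eq_getLast hne] at hx
    rw [List.head?_eq_head hne] at hy
    simp only [Option.mem_def, Option.some_inj] at hx hy
    subst hx; subst hy; exact hcyc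
  obtain ⟨hJchain, hJhl⟩ := join_chain_aux hcchain hne hcy j
  set J := (List.replicate j cyc).flatten with hJ
  have hJne : j ≠ 0 → J ≠ [] := by
    intro h0 h
    have := (hJhl h0).1
    rw [h] at this
    simp [List.head?_eq_head hne] at this
  -- boundary: last of l₁ relates to head of cyc
  have hb1 : ∀ x ∈ l₁.getLast?, ∀ y ∈ cyc.head?, R x y := by
    intro x hx y hy
    refine hb1c x hx y ?_
    rw [List.head?_append_of_ne_nil _ hne]; exact hy
  -- derived: last of l₁ relates to head of l₂
  have hb12 : ∀ x ∈ l₁.getLast?, ∀ y ∈ l₂.head?, R x y := by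
    intro x hx y hy
    have h₁ := hb1 x hx _ (List.head?_eq_head hne)
    have h₂ := hbc2 _ (List.getLast?_eq_getLast hne) y hy
    simp only [hR] at *
    rw [h₁, ← hcyc, h₂]
  have hchain : (l₁ ++ J ++ l₂).Chain' R := by
    simp only [List.Chain']
    rw [List.append_assoc, List.isChain_append, List.isChain_append]
    refine ⟨h1, ⟨hJchain, h2, ?_⟩, ?_⟩
    · rcases Nat.eq_zero_or_pos j with h0 | hpos
      · subst h0; simp [hJ]
      · intro x hx y hy
        rw [(hJhl hpos.ne').2] at hx
        exact hbc2 x hx y hy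
    · rcases Nat.eq_zero_or_pos j with h0 | hpos
      · subst h0; simp only [hJ, List.replicate_zero, List.flatten_nil, List.nil_append]
        exact hb12
      · intro x hx y hy
        rw [List.head?_append_of_ne_nil _ (hJne hpos.ne'), (hJhl hpos.ne').1] at hy
        exact hb1 x hx y hy
  refine ⟨hchain, ?_, ?_⟩
  · intro hnenil
    constructor
    · -- heads
      rcases List.eq_nil_or_concat l₁ with rfl | ⟨_, _, rfl⟩
      · simp only [List.nil_append] at hnenil ⊢
        rcases Nat.eq_zero_or_pos j with h0 | hpos
        · subst h0
          simp only [hJ, List.replicate_zero, List.flatten_nil, List.nil_append] at hnenil ⊢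
          have hl₂ : l₂ ≠ [] := hnenil
          rw [List.head?_append_of_ne_nil _ hne, List.head?_eq_head hne,
            List.head?_eq_head hl₂]
          have h₂ := hbc2 _ (List.getLast?_eq_getLast hne) _ (List.head?_eq_head hl₂)
          simp only [hR] at h₂
          simp [← hcyc, h₂]
        · rw [List.head?_append_of_ne_nil _ (hJne hpos.ne'),
            List.head?_append_of_ne_nil _ hne, (hJhl hpos.ne').1]
      · rw [List.append_assoc, List.append_assoc, List.head?_append_of_ne_nil,
          List.head?_append_of_ne_nil] <;> simp
    · -- lasts
      rcases List.eq_nil_or_concat l₂ with rfl | ⟨_, _, rfl⟩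
      · simp only [List.append_nil] at hnenil ⊢
        rcases Nat.eq_zero_or_pos j with h0 | hpos
        · subst h0
          simp only [hJ, List.replicate_zero, List.flatten_nil, List.append_nil] at hnenil ⊢
          have hl₁ : l₁ ≠ [] := hnenil
          rw [List.getLast?_append_of_ne_nil _ hne, List.getLast?_eq_getLast hne,
            List.getLast?_eq_getLast hl₁]
          have h₁ := hb1 _ (List.getLast?_eq_getLast hl₁) _ (List.head?_eq_head hne)
          simp only [hR] at h₁
          simp [h₁, hcyc]
        · rw [List.getLast?_append_of_ne_nil _ (hJne hpos.ne'),
            List.getLast?_append_of_ne_nil _ hne, (hJhl hpos.ne').2]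
      · rw [List.getLast?_append_of_ne_nil, List.getLast?_append_of_ne_nil] <;> simp
  · -- sums
    have hJsum : (J.map (fun t => t.2.2)).sum = j • (cyc.map (fun t => t.2.2)).sum := by
      rw [hJ, List.map_flatten, List.map_replicate, List.sum_flatten, List.map_replicate,
        List.sum_replicate]
    simp only [List.map_append, List.sum_append, hJsum]
    have : ((j : ℤ) - 1) • (cyc.map (fun t => t.2.2)).sum
        = j • (cyc.map (fun t => t.2.2)).sum - (cyc.map (fun t => t.2.2)).sum := by
      rw [sub_smul, one_smul, natCast_zsmul]
    rw [this]; abel
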